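/- Let A be a commutative ring, ρ ∈ A, t a variable with t² = 0. Consider the subring B ⊆ (A[t]/(t²)) × (A[t]/(t²)) consisting of pairs of the form (a + bt, a + (b + ρβ)t) with a, b, β ∈ A. Then B is a subring, the element π = (t, t) lies in B, and the map B/(π) → A[t]/(t²) (with new variable z, z² = 0) sending the class of (a + bt, a + (b + ρβ)t) to a + βz is a well-defined ring isomorphism, provided ρ is a non-zerodivisor in A. -/

import Mathlib

open TrivSqZeroExt

section Aux
variable (A : Type*) [CommRing A] (ρ : A)

def myB : Subring (DualNumber A × DualNumber A) where
  carrier := {x | ∃ a b β : A, x = (inl a + inr b, inl a + inr (b + ρ * β))}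
  one_mem' := ⟨1, 0, 0, by ext <;> simp⟩
  zero_mem' := ⟨0, 0, 0, by ext <;> simp⟩
  add_mem' := by
    rintro x y ⟨a, b, β, rfl⟩ ⟨a', b', β', rfl⟩
    exact ⟨a + a', b + b', β + β', by ext <;> simp <;> ring⟩
  neg_mem' := by
    rintro x ⟨a, b, β, rfl⟩
    exact ⟨-a, -b, -β, by ext <;> simp <;> ring⟩
  mul_mem' := by
    rintro x y ⟨a, b, β, rfl⟩ ⟨a', b', β', rfl⟩
    exact ⟨a * a', a * b' + a' * b, a * β' + a' * β, by
      ext <;> simp [snd_mul, smul_eq_mul] <;> ring⟩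

def myS : DualNumber A →+* myB A ρ where
  toFun x := ⟨(inl x.fst + inr 0, inl x.fst + inr (0 + ρ * x.snd)), ⟨x.fst, 0, x.snd, rfl⟩⟩
  map_one' := by ext <;> simp
  map_zero' := by ext <;> simp
  map_mul' x y := by ext <;> simp [snd_mul, smul_eq_mul] <;> ring
  map_add' x y := by ext <;> simp <;> ring
end Aux

set_option maxHeartbeats 1000000 in
set_option synthInstance.maxHeartbeats 400000 in
theorem stmt7 (A : Type*) [CommRing A] (ρ : A)
    (hρ : ∀ a : A, ρ * a = 0 → a = 0) :
    ∃ B : Subring (DualNumber A × DualNumber A),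
      (B : Set (DualNumber A × DualNumber A)) =
        {x | ∃ a b β : A, x = (inl a + inr b, inl a + inr (b + ρ * β))} ∧
      ∃ hπ : ((inr 1, inr 1) : DualNumber A × DualNumber A) ∈ B,
      ∃ e : (B ⧸ Ideal.span {(⟨(inr 1, inr 1), hπ⟩ : B)}) ≃+* DualNumber A,
        ∀ (a b β : A) (h : ((inl a + inr b, inl a + inr (b + ρ * β)) :
            DualNumber A × DualNumber A) ∈ B),
          e (Ideal.Quotient.mk _ ⟨_, h⟩) = inl a + inr β := by
  refine ⟨myB A ρ, rfl, ⟨0, 1, 0, by ext <;> simp⟩, ?_⟩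
  set π : myB A ρ := ⟨(inr 1, inr 1), ⟨0, 1, 0, by ext <;> simp⟩⟩ with hπdef
  set I : Ideal (myB A ρ) := Ideal.span {π} with hI
  set g : DualNumber A →+* (myB A ρ) ⧸ I := (Ideal.Quotient.mk I).comp (myS A ρ) with hg
  -- key: elements of I have the form ((0,c),(0,c))
  have mem_I : ∀ x : myB A ρ, x ∈ I →
      ∃ c : A, (x : DualNumber A × DualNumber A) = (inl 0 + inr c, inl 0 + inr c) := by
    intro x hx
    obtain ⟨y, hy⟩ := Ideal.mem_span_singleton.mp hx
    obtain ⟨a, b, β, hval⟩ := y.2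
    refine ⟨a, ?_⟩
    have : (x : DualNumber A × DualNumber A) = (inr 1, inr 1) * (y : DualNumber A × DualNumber A) := by
      rw [hy]; rfl
    rw [this, hval]
    ext <;> simp [snd_mul, smul_eq_mul]
  have mem_I' : ∀ c : A,
      (⟨(inl 0 + inr c, inl 0 + inr c), ⟨0, c, 0, by ext <;> simp⟩⟩ : myB A ρ) ∈ I := by
    intro c
    refine Ideal.mem_span_singleton.mpr ⟨⟨(inl c + inr 0, inl c + inr (0 + ρ * 0)), ⟨c, 0, 0, rfl⟩⟩, ?_⟩
    ext <;> simp [snd_mul, smul_eq_mul, hπdef]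
  have hinj : Function.Injective g := by
    rw [injective_iff_map_eq_zero]
    intro x hx
    have hxI : myS A ρ x ∈ I := Ideal.Quotient.eq_zero_iff_mem.mp hx
    obtain ⟨c, hc⟩ := mem_I _ hxI
    have h1 : (inl x.fst + inr 0 : DualNumber A) = inl 0 + inr c := congrArg Prod.fst hc
    have h2 : (inl x.fst + inr (0 + ρ * x.snd) : DualNumber A) = inl 0 + inr c :=
      congrArg Prod.snd hc
    have hfst : x.fst = 0 := by simpa using congrArg fst h1
    have hc0 : c = 0 := by simpa using (congrArg snd h1).symm
    have hsnd : ρ * x.snd = 0 := by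
      have := congrArg snd h2; simp [hc0] at this; simpa using this
    have hsnd' : x.snd = 0 := hρ _ hsnd
    ext <;> simp [hfst, hsnd']
  have key : ∀ (a b β : A) (h : ((inl a + inr b, inl a + inr (b + ρ * β)) :
      DualNumber A × DualNumber A) ∈ myB A ρ),
      g (inl a + inr β) = Ideal.Quotient.mk I ⟨_, h⟩ := by
    intro a b β h
    refine (Ideal.Quotient.eq.mpr ?_)
    have : myS A ρ (inl a + inr β) - (⟨_, h⟩ : myB A ρ) =
        ⟨(inl 0 + inr (-b), inl 0 + inr (-b)), ⟨0, -b, 0, by ext <;> simp⟩⟩ := by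
      ext <;> simp [myS]
    exact this ▸ mem_I' (-b)
  have hsurj : Function.Surjective g := by
    intro q
    obtain ⟨x, rfl⟩ := Ideal.Quotient.mk_surjective q
    obtain ⟨a, b, β, hval⟩ := x.2
    have hx : x = ⟨_, hval ▸ x.2⟩ := Subtype.ext hval
    exact ⟨inl a + inr β, by rw [hx]; exact key a b β _⟩
  refine ⟨(RingEquiv.ofBijective g ⟨hinj, hsurj⟩).symm, ?_⟩
  intro a b β h
  have hk : (RingEquiv.ofBijective g ⟨hinj, hsurj⟩) (inl a + inr β) =
      Ideal.Quotient.mk I ⟨_, h⟩ := key a b β h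
  rw [← hk, RingEquiv.symm_apply_apply]
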